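/- Let d be even and s a positive integer with 2s ≤ d. Let ε and γ belong to I^s \ {α, ω}, let i = t(ε) and j = t(γ), and suppose ε_s = 0. If either (1) γ_s = 0, or (2) γ_s = 1 and j ≥ i, then for every x ∈ B_ε and y ∈ B_γ one has ⟨ε, γ⟩ ≤ ⟨x, y⟩. -/

import Mathlib

/-- Strings of length `d` over the alphabet `S = {0,1,*}`; `none` is the joker `*`. -/
abbrev JString (d : ℕ) := Fin d → Option Bool

/-- The distance between two strings over `{0,1,*}`: the number of positions where both
entries are binary digits and they differ. -/
def jDist {d : ℕ} (u v : JString d) : ℕ :=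
  (Finset.univ.filter fun i => ∃ a b : Bool, u i = some a ∧ v i = some b ∧ a ≠ b).card

/-- `nkd k d` is `n(k,d)`: the maximum size of a family of strings in `S^d` any two
distinct members of which are at distance at least `1` and at most `k`. -/
noncomputable def nkd (k d : ℕ) : ℕ :=
  sSup {m | ∃ F : Finset (JString d),
    (∀ u ∈ F, ∀ v ∈ F, u ≠ v → 1 ≤ jDist u v ∧ jDist u v ≤ k) ∧ F.card = m}

/-- The weight `|x|` of a binary string. -/
def wt {n : ℕ} (x : Fin n → Bool) : ℕ := (Finset.univ.filter fun i => x i = true).card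

/-- The inner product `⟨x,y⟩` of two binary strings. -/
def ip {n : ℕ} (x y : Fin n → Bool) : ℕ :=
  (Finset.univ.filter fun i => x i = true ∧ y i = true).card

/-- The antipode `x̄` of a binary string. -/
def antipode {n : ℕ} (x : Fin n → Bool) : Fin n → Bool := fun i => !(x i)

/-- `t(ε)` (0-based): the largest index at which `ε` differs from its last entry; for
nonconstant `ε` this is the unique (0-based) index `i` with `ε i ≠ ε (i+1) = ⋯ = ε (s-1)`. -/
noncomputable def tIdx {s : ℕ} (ε : Fin s → Bool) : ℕ :=
  sSup {i : ℕ | ∃ h : i < s, ∃ h' : s - 1 < s, ε ⟨i, h⟩ ≠ ε ⟨s - 1, h'⟩}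

/-- The set `A_ε = {ε_1} × ⋯ × {ε_{t(ε)}} × I^{s-1-t(ε)} ⊆ I^{s-1}`. -/
def Aset {s : ℕ} (ε : Fin s → Bool) : Set (Fin (s - 1) → Bool) :=
  {x | ∀ j : Fin (s - 1), (j : ℕ) ≤ tIdx ε →
    x j = ε ⟨(j : ℕ), Nat.lt_of_lt_of_le j.isLt (Nat.sub_le s 1)⟩}

/-- The sets `X_k ⊆ I^{d-s}`: `X_0 = {|x| ≤ d/2 - s}`, `X_k = {|x| = d/2 - s + k}` for
`0 < k < s`, and `X_s = {|x| ≥ d/2}`. -/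
def Xk (d s k : ℕ) : Set (Fin (d - s) → Bool) :=
  if k = 0 then {x | wt x ≤ d / 2 - s}
  else if k = s then {x | d / 2 ≤ wt x}
  else {x | wt x = d / 2 - s + k}

/-- The last `m` coordinates of a binary string of length `n` (junk values if `m > n`). -/
def suffix (m : ℕ) {n : ℕ} (x : Fin n → Bool) : Fin m → Bool :=
  fun j => if h : n - m + (j : ℕ) < n then x ⟨n - m + (j : ℕ), h⟩ else false

/-- The set `B_ε ⊆ I^{d-s}`: `B_α = X_0`, `B_ω = X_s`, and for `ε ∉ {α,ω}`,
`B_ε = X_{|ε|} ∩ (I^{d-2s+1} × A_ε)`, identifying `I^{d-s}` with `I^{d-2s+1} × I^{s-1}`. -/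
def Bset (d : ℕ) {s : ℕ} (ε : Fin s → Bool) : Set (Fin (d - s) → Bool) :=
  if ε = (fun _ => false) then Xk d s 0
  else if ε = (fun _ => true) then Xk d s s
  else Xk d s (wt ε) ∩ {x | suffix (s - 1) x ∈ Aset ε}

/-- Concatenation of a binary string of length `d - s` with a string over `{0,1,*}` of
length `s`, producing a string over `{0,1,*}` of length `d`. -/
def glue {d s : ℕ} (x : Fin (d - s) → Bool) (w : Fin s → Option Bool) : JString d :=
  fun i => if h : (i : ℕ) < d - s then some (x ⟨(i : ℕ), h⟩)
    else if h' : (i : ℕ) - (d - s) < s then w ⟨(i : ℕ) - (d - s), h'⟩ else none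

/-- The set `*^ε = *^{ε_1} × ⋯ × *^{ε_s} ⊆ S^s`, where `*^0 = {*}` and `*^1 = {0,1}`. -/
def starSet {s : ℕ} (ε : Fin s → Bool) : Set (Fin s → Option Bool) :=
  {w | ∀ j, if ε j = true then ∃ b : Bool, w j = some b else w j = none}

/-- The set `C_ε = B_ε × *^ε ⊆ S^d`. -/
def Cset (d : ℕ) {s : ℕ} (ε : Fin s → Bool) : Set (JString d) :=
  {u | ∃ x ∈ Bset d ε, ∃ w ∈ starSet ε, u = glue x w}

/-- Beyond `tIdx ε`, all entries of `ε` agree with the last entry. -/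
lemma tIdx_last {s : ℕ} (ε : Fin s → Bool) (k : ℕ) (hk : k < s) (h : tIdx ε < k)
    (h' : s - 1 < s) : ε ⟨k, hk⟩ = ε ⟨s - 1, h'⟩ := by
  by_contra hne
  have hmem : k ∈ {i : ℕ | ∃ h : i < s, ∃ h' : s - 1 < s, ε ⟨i, h⟩ ≠ ε ⟨s - 1, h'⟩} :=
    ⟨hk, h', hne⟩
  have hbdd : BddAbove {i : ℕ | ∃ h : i < s, ∃ h' : s - 1 < s, ε ⟨i, h⟩ ≠ ε ⟨s - 1, h'⟩} := by
    refine ⟨s, fun m hm => ?_⟩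
    obtain ⟨h1, -⟩ := hm
    exact h1.le
  have := le_csSup hbdd hmem
  unfold tIdx at h
  omega

/-- For a nonconstant string, `tIdx ε ≤ s - 2`. -/
lemma tIdx_le_sub_two {s : ℕ} (ε : Fin s → Bool) (h' : s - 1 < s)
    (hne : ε ≠ fun _ => ε ⟨s - 1, h'⟩) : tIdx ε ≤ s - 2 := by
  have hne' : ∃ i : Fin s, ε i ≠ ε ⟨s - 1, h'⟩ := by
    by_contra h
    push_neg at h
    exact hne (funext fun i => h i)
  obtain ⟨i, hi⟩ := hne'
  have hnonempty : Set.Nonempty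
      {i : ℕ | ∃ h : i < s, ∃ h' : s - 1 < s, ε ⟨i, h⟩ ≠ ε ⟨s - 1, h'⟩} :=
    ⟨(i : ℕ), i.isLt, h', by simpa using hi⟩
  unfold tIdx
  apply csSup_le hnonempty
  intro m hm
  obtain ⟨h1, h2, h3⟩ := hm
  have : m ≠ s - 1 := by
    intro hms
    subst hms
    exact h3 rfl
  omega

/-- Let `d` be even, `s` positive with `2s ≤ d`. Let `ε, γ ∈ I^s ∖ {α, ω}`
with `ε_s = 0`. If either (1) `γ_s = 0`, or (2) `γ_s = 1` and `t(γ) ≥ t(ε)`, then for every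
`x ∈ B_ε` and `y ∈ B_γ` one has `⟨ε, γ⟩ ≤ ⟨x, y⟩`. -/
theorem ip_le_of_Bset (d s : ℕ) (hde : Even d) (hs : 0 < s) (hsd : 2 * s ≤ d)
    (ε γ : Fin s → Bool)
    (hεα : ε ≠ fun _ => false) (hεω : ε ≠ fun _ => true)
    (hγα : γ ≠ fun _ => false) (hγω : γ ≠ fun _ => true)
    (hεs : ε ⟨s - 1, Nat.sub_lt hs Nat.one_pos⟩ = false)
    (hcase : γ ⟨s - 1, Nat.sub_lt hs Nat.one_pos⟩ = false ∨
      (γ ⟨s - 1, Nat.sub_lt hs Nat.one_pos⟩ = true ∧ tIdx ε ≤ tIdx γ)) :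
    ∀ x ∈ Bset d ε, ∀ y ∈ Bset d γ, ip ε γ ≤ ip x y := by
  intro x hx y hy
  have h' : s - 1 < s := Nat.sub_lt hs Nat.one_pos
  have hs2 : 2 ≤ s := by
    by_contra h
    have hs1 : s = 1 := by omega
    subst hs1
    apply hεα
    funext i
    have hi : i = ⟨0, Nat.one_pos⟩ := Subsingleton.elim _ _
    rw [hi]
    exact hεs
  have hiε : tIdx ε ≤ s - 2 := by
    apply tIdx_le_sub_two ε h'
    intro hcon
    apply hεα
    rw [hcon]
    funext i
    rw [hεs]
  -- membership facts
  have hxB : suffix (s - 1) x ∈ Aset ε := by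
    have hx' := hx
    rw [Bset, if_neg hεα, if_neg hεω] at hx'
    exact hx'.2
  have hyB : suffix (s - 1) y ∈ Aset γ := by
    have hy' := hy
    rw [Bset, if_neg hγα, if_neg hγω] at hy'
    exact hy'.2
  -- key: indices in the support of both ε and γ are at most tIdx ε and tIdx γ
  have key : ∀ k : Fin s, ε k = true → γ k = true →
      (k : ℕ) ≤ tIdx ε ∧ (k : ℕ) ≤ tIdx γ := by
    intro k hek hgk
    have h1 : (k : ℕ) ≤ tIdx ε := by
      by_contra h
      push_neg at h
      have h2 := tIdx_last ε (k : ℕ) k.isLt h h'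
      rw [hεs, Fin.eta] at h2
      rw [hek] at h2
      exact Bool.noConfusion h2
    refine ⟨h1, ?_⟩
    rcases hcase with hγs | ⟨hγs, hij⟩
    · by_contra h
      push_neg at h
      have h2 := tIdx_last γ (k : ℕ) k.isLt h h'
      rw [hγs, Fin.eta] at h2
      rw [hgk] at h2
      exact Bool.noConfusion h2
    · omega
  rw [ip, ip]
  refine Finset.card_le_card_of_injOn
    (fun k : Fin s => (⟨d - 2 * s + 1 + min (k : ℕ) (s - 2), by omega⟩ : Fin (d - s)))
    ?_ ?_
  · intro k hk
    rw [Finset.mem_coe, Finset.mem_filter] at hk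
    obtain ⟨-, hek, hgk⟩ := hk
    obtain ⟨hk1, hk2⟩ := key k hek hgk
    have hks : (k : ℕ) ≤ s - 2 := le_trans hk1 hiε
    have hmin : min (k : ℕ) (s - 2) = (k : ℕ) := min_eq_left hks
    have hklt : (k : ℕ) < s - 1 := by omega
    have hlt : (d - s) - (s - 1) + (k : ℕ) < d - s := by omega
    have hfin : (⟨d - 2 * s + 1 + min (k : ℕ) (s - 2), by omega⟩ : Fin (d - s)) =
        ⟨(d - s) - (s - 1) + (k : ℕ), hlt⟩ := by
      apply Fin.ext
      simp only [hmin]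
      omega
    rw [Finset.mem_coe, Finset.mem_filter]
    refine ⟨Finset.mem_univ _, ?_, ?_⟩
    · have hax := hxB ⟨(k : ℕ), hklt⟩ hk1
      rw [suffix] at hax
      rw [dif_pos hlt] at hax
      beta_reduce
      rw [hfin, hax, Fin.eta, hek]
    · have hay := hyB ⟨(k : ℕ), hklt⟩ hk2
      rw [suffix] at hay
      rw [dif_pos hlt] at hay
      beta_reduce
      rw [hfin, hay, Fin.eta, hgk]
  · intro k1 hk1 k2 hk2 hfk
    simp only [Finset.coe_filter, Set.mem_setOf_eq, Finset.mem_univ, true_and] at hk1 hk2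
    obtain ⟨hk1a, hk1b⟩ := key k1 hk1.1 hk1.2
    obtain ⟨hk2a, hk2b⟩ := key k2 hk2.1 hk2.2
    have h1 : min (k1 : ℕ) (s - 2) = (k1 : ℕ) := min_eq_left (le_trans hk1a hiε)
    have h2 : min (k2 : ℕ) (s - 2) = (k2 : ℕ) := min_eq_left (le_trans hk2a hiε)
    have hv := congrArg Fin.val hfk
    simp only [h1, h2] at hv
    exact Fin.ext (by omega)
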